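/- Let {B_{a|x}} be a measurement assemblage with IR(B) achieved at a full-rank state ρ̃, i.e., SR(ρ̃^{1/2} B ρ̃^{1/2}) = IR(B). Then one may choose the noise assemblage ξ and the LHS assemblage τ attaining the optimal decomposition of SR(ρ̃^{1/2} B ρ̃^{1/2}) so that both have reduced state ρ̃, i.e., Σ_a ξ_{a|x} = Σ_a τ_{a|x} = ρ̃ for all x. -/

import Mathlib

open Matrix Kronecker BigOperators ComplexOrder

noncomputable section

/-- A density matrix: positive semidefinite with unit trace. -/
def IsDensity {d : ℕ} (ρ : Matrix (Fin d) (Fin d) ℂ) : Prop :=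
  ρ.PosSemidef ∧ ρ.trace = 1

/-- A POVM: positive semidefinite effects summing to the identity. -/
def IsPOVM {d nl : ℕ} (G : Fin nl → Matrix (Fin d) (Fin d) ℂ) : Prop :=
  (∀ l, (G l).PosSemidef) ∧ ∑ l, G l = 1

/-- A measurement assemblage: for each setting `x`, a POVM `a ↦ M x a`. -/
def IsMA {d na nx : ℕ} (M : Fin nx → Fin na → Matrix (Fin d) (Fin d) ℂ) : Prop :=
  (∀ x a, (M x a).PosSemidef) ∧ ∀ x, ∑ a, M x a = 1

/-- Joint measurability: `M x a = ∑ λ p(a|x,λ) G λ` for a parent POVM `G`. -/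
def JM {d na nx : ℕ} (M : Fin nx → Fin na → Matrix (Fin d) (Fin d) ℂ) : Prop :=
  ∃ (nl : ℕ) (G : Fin nl → Matrix (Fin d) (Fin d) ℂ)
    (p : Fin nx → Fin na → Fin nl → ℝ),
    IsPOVM G ∧ (∀ x a l, 0 ≤ p x a l) ∧ (∀ x l, ∑ a, p x a l = 1) ∧
    ∀ x a, M x a = ∑ l, (p x a l : ℂ) • G l

/-- A state assemblage: PSD elements with an `x`-independent reduced density matrix. -/
def IsSA {d na nx : ℕ} (σ : Fin nx → Fin na → Matrix (Fin d) (Fin d) ℂ) : Prop :=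
  (∀ x a, (σ x a).PosSemidef) ∧
  ∃ ρ : Matrix (Fin d) (Fin d) ℂ, IsDensity ρ ∧ ∀ x, ∑ a, σ x a = ρ

/-- Local-hidden-state model: `σ x a = ∑ λ q(λ) p(a|x,λ) ρ_λ`. -/
def LHS {d na nx : ℕ} (σ : Fin nx → Fin na → Matrix (Fin d) (Fin d) ℂ) : Prop :=
  ∃ (nl : ℕ) (q : Fin nl → ℝ) (p : Fin nx → Fin na → Fin nl → ℝ)
    (ρ : Fin nl → Matrix (Fin d) (Fin d) ℂ),
    (∀ l, 0 ≤ q l) ∧ (∑ l, q l = 1) ∧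
    (∀ x a l, 0 ≤ p x a l) ∧ (∀ x l, ∑ a, p x a l = 1) ∧
    (∀ l, IsDensity (ρ l)) ∧
    ∀ x a, σ x a = ∑ l, ((q l * p x a l : ℝ) : ℂ) • ρ l

/-- Incompatibility robustness. -/
def IR {d na nx : ℕ} (B : Fin nx → Fin na → Matrix (Fin d) (Fin d) ℂ) : ℝ :=
  sInf {t : ℝ | 0 ≤ t ∧ ∃ N, IsMA N ∧
    JM (fun x a => (((1 + t : ℝ))⁻¹ : ℂ) • (B x a + (t : ℂ) • N x a))}

/-- Steering robustness. -/
def SR {d na nx : ℕ} (σ : Fin nx → Fin na → Matrix (Fin d) (Fin d) ℂ) : ℝ :=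
  sInf {t : ℝ | 0 ≤ t ∧ ∃ ξ, IsSA ξ ∧
    LHS (fun x a => (((1 + t : ℝ))⁻¹ : ℂ) • (σ x a + (t : ℂ) • ξ x a))}

/-- Incompatible weight. -/
def IW {d na nx : ℕ} (B : Fin nx → Fin na → Matrix (Fin d) (Fin d) ℂ) : ℝ :=
  sInf {t : ℝ | 0 ≤ t ∧ t ≤ 1 ∧ ∃ N O, IsMA N ∧ JM O ∧
    ∀ x a, B x a = (t : ℂ) • N x a + ((1 - t : ℝ) : ℂ) • O x a}

/-- Steerable weight. -/
def SW {d na nx : ℕ} (σ : Fin nx → Fin na → Matrix (Fin d) (Fin d) ℂ) : ℝ :=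
  sInf {t : ℝ | 0 ≤ t ∧ t ≤ 1 ∧ ∃ ξ τ, IsSA ξ ∧ LHS τ ∧
    ∀ x a, σ x a = (t : ℂ) • ξ x a + ((1 - t : ℝ) : ℂ) • τ x a}

/-- Positive map on matrices. -/
def PosMap {d : ℕ} (E : Matrix (Fin d) (Fin d) ℂ →ₗ[ℂ] Matrix (Fin d) (Fin d) ℂ) : Prop :=
  ∀ X, X.PosSemidef → (E X).PosSemidef

/-- Trace-nonincreasing on PSD matrices. -/
def TNI {d : ℕ} (E : Matrix (Fin d) (Fin d) ℂ →ₗ[ℂ] Matrix (Fin d) (Fin d) ℂ) : Prop :=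
  ∀ X : Matrix (Fin d) (Fin d) ℂ, X.PosSemidef → (E X).trace.re ≤ X.trace.re

/-- `Ed` is the Hilbert–Schmidt adjoint of `E`. -/
def IsAdjoint {d : ℕ} (E Ed : Matrix (Fin d) (Fin d) ℂ →ₗ[ℂ] Matrix (Fin d) (Fin d) ℂ) : Prop :=
  ∀ X Y, ((E X)ᴴ * Y).trace = (Xᴴ * (Ed Y)).trace

/-- Partial trace over the first tensor factor. -/
def ptraceA {d d' : ℕ} (M : Matrix (Fin d × Fin d') (Fin d × Fin d') ℂ) :
    Matrix (Fin d') (Fin d') ℂ :=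
  Matrix.of fun i j => ∑ k : Fin d, M (k, i) (k, j)

/-- The map `E ⊗ id` acting on bipartite matrices. -/
def tensId {d d' : ℕ} (E : Matrix (Fin d) (Fin d) ℂ →ₗ[ℂ] Matrix (Fin d) (Fin d) ℂ)
    (M : Matrix (Fin d × Fin d') (Fin d × Fin d') ℂ) :
    Matrix (Fin d × Fin d') (Fin d × Fin d') ℂ :=
  Matrix.of fun p q => E (Matrix.of fun i k => M (i, p.2) (k, q.2)) p.1 q.1

/-- The square root of a positive semidefinite matrix (the definition Mathlib had in
December 2024, since removed from Mathlib). -/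
def Matrix.PosSemidef.sqrt {n 𝕜 : Type*} [Fintype n] [RCLike 𝕜] [DecidableEq n]
    {A : Matrix n n 𝕜} (hA : A.PosSemidef) : Matrix n n 𝕜 :=
  hA.1.eigenvectorUnitary.1 * diagonal ((↑) ∘ (√·) ∘ hA.1.eigenvalues) *
  (star hA.1.eigenvectorUnitary : Matrix n n 𝕜)

lemma my_sqrt_psd {d : ℕ} {A : Matrix (Fin d) (Fin d) ℂ} (hA : A.PosSemidef) :
    hA.sqrt.PosSemidef := by
  unfold Matrix.PosSemidef.sqrt
  have hD : (diagonal ((↑) ∘ (√·) ∘ hA.1.eigenvalues) : Matrix (Fin d) (Fin d) ℂ).PosSemidef := by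
    rw [posSemidef_diagonal_iff]
    intro i
    simp [Real.sqrt_nonneg]
  have := hD.mul_mul_conjTranspose_same (hA.1.eigenvectorUnitary : Matrix (Fin d) (Fin d) ℂ)
  simpa [star_eq_conjTranspose] using this

lemma my_sqrt_mul_self {d : ℕ} {A : Matrix (Fin d) (Fin d) ℂ} (hA : A.PosSemidef) :
    hA.sqrt * hA.sqrt = A := by
  unfold Matrix.PosSemidef.sqrt
  have hU : (star hA.1.eigenvectorUnitary : Matrix (Fin d) (Fin d) ℂ) * hA.1.eigenvectorUnitary.1 = 1 :=
    Unitary.coe_star_mul_self _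
  conv_rhs => rw [hA.1.spectral_theorem]
  rw [Unitary.conjStarAlgAut_apply]
  calc _ = hA.1.eigenvectorUnitary.1 * (diagonal ((↑) ∘ (√·) ∘ hA.1.eigenvalues) *
      ((star hA.1.eigenvectorUnitary : Matrix (Fin d) (Fin d) ℂ) * hA.1.eigenvectorUnitary.1) *
      diagonal ((↑) ∘ (√·) ∘ hA.1.eigenvalues)) *
      (star hA.1.eigenvectorUnitary : Matrix (Fin d) (Fin d) ℂ) := by simp only [mul_assoc]; rfl
    _ = _ := by
      rw [hU, mul_one, diagonal_mul_diagonal]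
      congr 3
      funext i
      simp only [Function.comp]
      rw [← Complex.ofReal_mul, Real.mul_self_sqrt (hA.eigenvalues_nonneg i)]
      rfl


lemma my_psd_smul {d : ℕ} {A : Matrix (Fin d) (Fin d) ℂ} (hA : A.PosSemidef)
    {c : ℝ} (hc : 0 ≤ c) : ((c : ℂ) • A).PosSemidef := by
  refine posSemidef_iff_dotProduct_mulVec.mpr ⟨?_, ?_⟩
  · rw [IsHermitian, conjTranspose_smul, hA.1.eq]
    congr 1
    simp [Complex.ext_iff]
  · intro x
    rw [smul_mulVec, dotProduct_smul]
    exact mul_nonneg (by exact_mod_cast hc) (hA.dotProduct_mulVec_nonneg x)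

lemma my_psd_trace_nonneg {d : ℕ} {A : Matrix (Fin d) (Fin d) ℂ} (hA : A.PosSemidef) :
    0 ≤ A.trace := by
  have : ∀ i, 0 ≤ A i i := by
    intro i
    have := hA.dotProduct_mulVec_nonneg (Pi.single i 1)
    simpa [dotProduct, mulVec, Pi.single_apply, Finset.sum_ite_eq, Finset.mul_sum] using this
  exact Finset.sum_nonneg fun i _ => this i

lemma my_psd_trace_zero {d : ℕ} {A : Matrix (Fin d) (Fin d) ℂ} (hA : A.PosSemidef)
    (h : A.trace = 0) : A = 0 := by
  have hS : hA.sqrt ᴴ * hA.sqrt = A := by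
    rw [(my_sqrt_psd hA).1.eq, my_sqrt_mul_self hA]
  have htr : (hA.sqrt ᴴ * hA.sqrt).trace = 0 := by rw [hS, h]
  have hsum : ∑ j, ∑ i, Complex.normSq (hA.sqrt i j) = 0 := by
    have : (hA.sqrt ᴴ * hA.sqrt).trace
        = ((∑ j, ∑ i, Complex.normSq (hA.sqrt i j) : ℝ) : ℂ) := by
      simp [Matrix.trace, Matrix.diag, Matrix.mul_apply, conjTranspose_apply,
        Complex.normSq_eq_conj_mul_self]
    rw [this] at htr
    exact_mod_cast htr
  have hzero : hA.sqrt = 0 := by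
    ext i j
    have h1 : ∀ j ∈ Finset.univ, (0:ℝ) ≤ ∑ i, Complex.normSq (hA.sqrt i j) :=
      fun j _ => Finset.sum_nonneg fun i _ => Complex.normSq_nonneg _
    have h2 := (Finset.sum_eq_zero_iff_of_nonneg h1).mp hsum j (Finset.mem_univ _)
    have h3 := (Finset.sum_eq_zero_iff_of_nonneg
      (fun i _ => Complex.normSq_nonneg (hA.sqrt i j))).mp h2 i (Finset.mem_univ _)
    simpa using Complex.normSq_eq_zero.mp h3
  rw [← my_sqrt_mul_self hA, hzero, Matrix.mul_zero]

/-- the optimal decomposition of SR(ρ̃^{1/2} B ρ̃^{1/2}) can be chosen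
with both the noise and LHS assemblages having reduced state ρ̃. -/
theorem optimal_decomposition_consistent_marginal {d na nx : ℕ}
    (B : Fin nx → Fin na → Matrix (Fin d) (Fin d) ℂ) (hB : IsMA B)
    (ρ : Matrix (Fin d) (Fin d) ℂ) (hρ : ρ.PosDef) (hρ1 : ρ.trace = 1)
    (hopt : SR (fun x a => hρ.posSemidef.sqrt * B x a * hρ.posSemidef.sqrt) = IR B)
    (hattain : ∃ N D, IsMA N ∧ JM D ∧
      ∀ x a, B x a + ((IR B : ℝ) : ℂ) • N x a = ((1 + IR B : ℝ) : ℂ) • D x a) :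
    ∃ ξ τ : Fin nx → Fin na → Matrix (Fin d) (Fin d) ℂ,
      IsSA ξ ∧ LHS τ ∧
      (∀ x a, hρ.posSemidef.sqrt * B x a * hρ.posSemidef.sqrt +
          ((SR (fun x a => hρ.posSemidef.sqrt * B x a * hρ.posSemidef.sqrt) : ℝ) : ℂ) • ξ x a =
        ((1 + SR (fun x a => hρ.posSemidef.sqrt * B x a * hρ.posSemidef.sqrt) : ℝ) : ℂ) • τ x a) ∧
      (∀ x, ∑ a, ξ x a = ρ) ∧ (∀ x, ∑ a, τ x a = ρ) := by
  obtain ⟨N, D, hN, hD, heq⟩ := hattain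
  set S := hρ.posSemidef.sqrt with hSdef
  have hSps : S.PosSemidef := my_sqrt_psd hρ.posSemidef
  have hSH : Sᴴ = S := hSps.1.eq
  have hSS : S * S = ρ := my_sqrt_mul_self hρ.posSemidef
  have hconj : ∀ M : Matrix (Fin d) (Fin d) ℂ, M.PosSemidef → (S * M * S).PosSemidef := by
    intro M hM
    simpa [hSH] using hM.mul_mul_conjTranspose_same S
  refine ⟨fun x a => S * N x a * S, fun x a => S * D x a * S, ?_, ?_, ?_, ?_, ?_⟩
  · refine ⟨fun x a => hconj _ (hN.1 x a), ρ, ⟨hρ.posSemidef, hρ1⟩, fun x => ?_⟩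
    rw [← Finset.sum_mul, ← Finset.mul_sum, hN.2 x, Matrix.mul_one, hSS]
  · -- LHS for τ
    obtain ⟨nl, G, p, hG, hp0, hp1, hDeq⟩ := hD
    set q : Fin nl → ℝ := fun l => (S * G l * S).trace.re with hq
    have hMps : ∀ l, (S * G l * S).PosSemidef := fun l => hconj _ (hG.1 l)
    have htrace : ∀ l, (S * G l * S).trace = ((q l : ℝ) : ℂ) := by
      intro l
      have h := my_psd_trace_nonneg (hMps l)
      rw [Complex.le_def] at h
      simp only [Complex.zero_re, Complex.zero_im] at h
      exact Complex.ext (by simp [hq]) (by simp [h.2.symm])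
    have hq0 : ∀ l, 0 ≤ q l := by
      intro l
      have h := my_psd_trace_nonneg (hMps l)
      rw [Complex.le_def] at h
      simpa using h.1
    have hqsum : ∑ l, q l = 1 := by
      have : ∑ l, ((q l : ℝ) : ℂ) = (1 : ℂ) := by
        calc ∑ l, ((q l : ℝ) : ℂ) = ∑ l, (S * G l * S).trace :=
              Finset.sum_congr rfl (fun l _ => (htrace l).symm)
          _ = (∑ l, S * G l * S).trace := (Matrix.trace_sum _ _).symm
          _ = (S * (∑ l, G l) * S).trace := by rw [← Finset.sum_mul, ← Finset.mul_sum]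
          _ = 1 := by rw [hG.2, Matrix.mul_one, hSS, hρ1]
      exact_mod_cast (by push_cast at this; exact_mod_cast this : ((∑ l, q l : ℝ) : ℂ) = 1)
    refine ⟨nl, q, p, fun l => if q l = 0 then ρ else ((q l)⁻¹ : ℂ) • (S * G l * S),
      hq0, hqsum, hp0, hp1, ?_, ?_⟩
    · intro l
      by_cases h : q l = 0
      · simp [h, IsDensity, hρ.posSemidef, hρ1]
      · simp only [h, if_false]
        constructor
        · have := my_psd_smul (hMps l) (c := (q l)⁻¹) (inv_nonneg.mpr (hq0 l))
          simpa using this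
        · rw [Matrix.trace_smul, htrace l, smul_eq_mul, ← Complex.ofReal_inv,
            ← Complex.ofReal_mul, inv_mul_cancel₀ h, Complex.ofReal_one]
    · intro x a
      show S * D x a * S = _
      rw [hDeq x a, Matrix.mul_sum, Matrix.sum_mul]
      refine Finset.sum_congr rfl fun l _ => ?_
      by_cases h : q l = 0
      · have hM0 : S * G l * S = 0 := my_psd_trace_zero (hMps l) (by rw [htrace l, h]; simp)
        simp [h, hM0, Matrix.smul_mul, Matrix.mul_smul]
      · simp only [h, if_false, smul_smul]
        have hq' : ((q l : ℝ) : ℂ) ≠ 0 := Complex.ofReal_ne_zero.mpr h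
        have hsc : ((q l * p x a l : ℝ) : ℂ) * ((q l : ℝ) : ℂ)⁻¹ = ((p x a l : ℝ) : ℂ) := by
          push_cast
          field_simp
        rw [hsc, Matrix.mul_smul, Matrix.smul_mul]
  · intro x a
    have h := heq x a
    rw [hopt]
    calc S * B x a * S + ((IR B : ℝ) : ℂ) • (S * N x a * S)
        = S * (B x a + ((IR B : ℝ) : ℂ) • N x a) * S := by
          rw [Matrix.mul_add, Matrix.add_mul, Matrix.mul_smul, Matrix.smul_mul]
      _ = ((1 + IR B : ℝ) : ℂ) • (S * D x a * S) := by
          rw [h, Matrix.mul_smul, Matrix.smul_mul]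
  · intro x
    rw [← Finset.sum_mul, ← Finset.mul_sum, hN.2 x, Matrix.mul_one, hSS]
  · intro x
    obtain ⟨nl, G, p, hG, hp0, hp1, hDeq⟩ := hD
    have : ∑ a, D x a = 1 := by
      have : ∑ a, D x a = ∑ l, ((∑ a, p x a l : ℝ) : ℂ) • G l := by
        rw [Finset.sum_congr rfl fun a _ => hDeq x a, Finset.sum_comm]
        refine Finset.sum_congr rfl fun l _ => ?_
        rw [← Finset.sum_smul]
        push_cast
        rfl
      rw [this, Finset.sum_congr rfl fun l _ => by rw [hp1 x l]]
      simpa using hG.2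
    rw [← Finset.sum_mul, ← Finset.mul_sum, this, Matrix.mul_one, hSS]
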